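/- Let G be an m×n matrix over F₂ with columns v₁,…,vₙ, and let V ⊆ F₂ⁿ be the span of the rows of G. Suppose K ≥ 1 is an integer such that for every index i with vᵢ ≠ 0 there exist at least K pairwise disjoint two-element sets {j,l} ⊆ {1,…,n}∖{i} with vᵢ = vⱼ + vₗ. Then every coset of V^⊥ in F₂ⁿ contains a vector of Hamming weight at most n/(K+1); equivalently, the covering radius of V^⊥ is at most n/(K+1). -/

import Mathlib

open Finset symmDiff

/-- The dual of a set of vectors in `F₂ⁿ`: all vectors orthogonal to every element. -/
def dualSet {n : ℕ} (V : Set (Fin n → ZMod 2)) : Set (Fin n → ZMod 2) :=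
  {y | ∀ x ∈ V, ∑ i, x i * y i = 0}

theorem pair_other {α : Type} [DecidableEq α] {p : Finset α} (h : p.card = 2) {b : α}
    (hb : b ∈ p) : ∃ a, a ≠ b ∧ p = {a, b} := by
  obtain ⟨c₁, c₂, hc, rfl⟩ := Finset.card_eq_two.1 h
  rcases Finset.mem_insert.1 hb with h1 | h1
  · subst h1
    exact ⟨c₂, fun h2 => hc h2.symm, Finset.pair_comm b c₂⟩
  · rw [Finset.mem_singleton] at h1
    subst h1
    exact ⟨c₁, hc, rfl⟩

theorem symmdiff_pairs {α : Type} [DecidableEq α] {a b x y : α}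
    (hab : a ≠ b) (hxa : x ≠ a) (hxb : x ≠ b) (hyb : y ≠ b) (hya : y ≠ a) :
    (({a,x} : Finset α) ∆ {a,b}) ∆ {b,y} ⊆ ({x,y} : Finset α) := by
  intro t ht
  simp only [Finset.mem_symmDiff, Finset.mem_insert, Finset.mem_singleton] at ht ⊢
  by_cases h1 : t = a <;> by_cases h2 : t = b <;> by_cases h3 : t = x <;>
    by_cases h4 : t = y <;> simp_all

theorem sum_symmDiff_char2 {α M : Type} [DecidableEq α] [AddCommGroup M]
    (h2 : ∀ x : M, x + x = 0) (f : α → M) (s t : Finset α) :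
    ∑ x ∈ s ∆ t, f x = (∑ x ∈ s, f x) + ∑ x ∈ t, f x := by
  have hd : Disjoint (s ∆ t) (s ∩ t) := by
    rw [Finset.disjoint_left]
    intro a ha hb
    rw [Finset.mem_symmDiff] at ha
    rw [Finset.mem_inter] at hb
    tauto
  have hu : (s ∆ t) ∪ (s ∩ t) = s ∪ t := by
    ext a
    simp only [Finset.mem_union, Finset.mem_symmDiff, Finset.mem_inter]
    tauto
  have key : (∑ x ∈ s ∆ t, f x) + ∑ x ∈ s ∩ t, f x = ∑ x ∈ s ∪ t, f x := by
    rw [← Finset.sum_union hd, hu]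
  calc ∑ x ∈ s ∆ t, f x
      = ∑ x ∈ s ∆ t, f x + ((∑ x ∈ s ∩ t, f x) + ∑ x ∈ s ∩ t, f x) := by
        rw [h2, add_zero]
    _ = ((∑ x ∈ s ∆ t, f x) + ∑ x ∈ s ∩ t, f x) + ∑ x ∈ s ∩ t, f x := by
        rw [add_assoc]
    _ = (∑ x ∈ s ∪ t, f x) + ∑ x ∈ s ∩ t, f x := by rw [key]
    _ = (∑ x ∈ s, f x) + ∑ x ∈ t, f x := Finset.sum_union_inter

theorem graph_lemma {α β : Type} [DecidableEq α] [DecidableEq β] :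
    ∀ (N : ℕ) (E : Finset (Finset α)) (U : Finset α) (ℓ : Finset α → β),
      E.card ≤ N →
      (∀ p ∈ E, p.card = 2) →
      (∀ p ∈ E, p ⊆ U) →
      (∀ p ∈ E, ∀ q ∈ E, p ≠ q → ℓ p = ℓ q → Disjoint p q) →
      (∀ p ∈ E, ∀ q ∈ E, ∀ r ∈ E, p ≠ q → p ≠ r → q ≠ r →
        ℓ p ≠ ℓ q → ℓ p ≠ ℓ r → ℓ q ≠ ℓ r → 3 ≤ ((p ∆ q) ∆ r).card) →
      E.card ≤ U.card := by
  intro N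
  induction N with
  | zero =>
    intro E U ℓ hN _ _ _ _
    exact le_trans hN (Nat.zero_le _)
  | succ N ih =>
    intro E U ℓ hN hcard hsub hdisj h3
    by_cases hdeg1 : ∃ x p₀, p₀ ∈ E ∧ x ∈ p₀ ∧ E.filter (fun p => x ∈ p) = {p₀}
    · obtain ⟨x, p₀, hp₀E, hxp₀, hfil⟩ := hdeg1
      have hxU : x ∈ U := hsub p₀ hp₀E hxp₀
      have hnotx : ∀ p ∈ E.erase p₀, x ∉ p := by
        intro p hp hxp
        have : p ∈ E.filter (fun p => x ∈ p) := mem_filter.2 ⟨mem_of_mem_erase hp, hxp⟩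
        rw [hfil, mem_singleton] at this
        exact (ne_of_mem_erase hp) this
      have hrec : (E.erase p₀).card ≤ (U.erase x).card := by
        apply ih (E.erase p₀) (U.erase x) ℓ
        · have := card_erase_of_mem hp₀E; omega
        · exact fun p hp => hcard p (mem_of_mem_erase hp)
        · intro p hp t ht
          exact mem_erase.2 ⟨fun h => hnotx p hp (h ▸ ht), hsub p (mem_of_mem_erase hp) ht⟩
        · exact fun p hp q hq => hdisj p (mem_of_mem_erase hp) q (mem_of_mem_erase hq)
        · exact fun p hp q hq r hr => h3 p (mem_of_mem_erase hp) q (mem_of_mem_erase hq)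
            r (mem_of_mem_erase hr)
      have h1 : (E.erase p₀).card = E.card - 1 := card_erase_of_mem hp₀E
      have h2 : (U.erase x).card = U.card - 1 := card_erase_of_mem hxU
      have h4 : 1 ≤ E.card := card_pos.2 ⟨p₀, hp₀E⟩
      have h5 : 1 ≤ U.card := card_pos.2 ⟨x, hxU⟩
      omega
    · -- no degree-one vertex: every incident vertex has a second edge
      push_neg at hdeg1
      have hdeg2 : ∀ x, ∀ p ∈ E, x ∈ p → ∃ q ∈ E, q ≠ p ∧ x ∈ q := by
        intro x p hp hxp
        by_contra hcon
        push_neg at hcon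
        apply hdeg1 x p hp hxp
        ext q
        simp only [mem_filter, mem_singleton]
        constructor
        · rintro ⟨hq, hxq⟩
          by_contra hne
          exact hcon q hq hne hxq
        · rintro rfl; exact ⟨hp, hxp⟩
      -- max degree ≤ 2
      have hmax : ∀ x, (E.filter (fun p => x ∈ p)).card ≤ 2 := by
        intro b
        by_contra hgt
        push_neg at hgt
        obtain ⟨p₁, p₂, p₃, hp₁, hp₂, hp₃, h12, h13, h23⟩ := two_lt_card_iff.1 hgt
        simp only [mem_filter] at hp₁ hp₂ hp₃
        obtain ⟨hp₁E, hbp₁⟩ := hp₁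
        obtain ⟨hp₂E, hbp₂⟩ := hp₂
        obtain ⟨hp₃E, hbp₃⟩ := hp₃
        -- labels pairwise distinct
        have hlab : ∀ p ∈ E, ∀ q ∈ E, p ≠ q → b ∈ p → b ∈ q → ℓ p ≠ ℓ q := by
          intro p hp q hq hne hbp hbq hl
          exact Finset.disjoint_left.1 (hdisj p hp q hq hne hl) hbp hbq
        -- a : other endpoint of p₁
        obtain ⟨a, hab, hp₁ab⟩ := pair_other (hcard p₁ hp₁E) hbp₁
        have hap₁ : a ∈ p₁ := by rw [hp₁ab]; simp
        -- second edge at a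
        obtain ⟨q, hqE, hqne, haq⟩ := hdeg2 a p₁ hp₁E hap₁
        obtain ⟨x, hxa, hqax⟩ := pair_other (hcard q hqE) haq
        rw [pair_comm] at hqax
        have hxb : x ≠ b := by
          intro h
          apply hqne
          rw [hqax, hp₁ab, h]
        -- b not in q
        have hbq' : b ∉ q := by
          rw [hqax]; simp [Ne.symm hab, Ne.symm hxb]
        -- a not in p₂, p₃
        have hanotin : ∀ p ∈ E, p ≠ p₁ → b ∈ p → a ∉ p := by
          intro p hp hne hbp hain2
          have hsubp : p₁ ⊆ p := by
            rw [hp₁ab]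
            simp [Finset.insert_subset_iff, hain2, hbp]
          exact hne (Finset.eq_of_subset_of_card_le hsubp
            (by rw [hcard p hp, hcard p₁ hp₁E])).symm
        have hl12 := hlab p₁ hp₁E p₂ hp₂E h12 hbp₁ hbp₂
        have hl13 := hlab p₁ hp₁E p₃ hp₃E h13 hbp₁ hbp₃
        have hl23 := hlab p₂ hp₂E p₃ hp₃E h23 hbp₂ hbp₃
        have hlq1 : ℓ q ≠ ℓ p₁ := by
          intro hl
          exact Finset.disjoint_left.1 (hdisj q hqE p₁ hp₁E hqne hl) haq hap₁
        -- choose p* among p₂ p₃ with label different from ℓ q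
        obtain ⟨ps, hpsE, hbps, hps1, hlqs, hls1⟩ :
            ∃ ps, ps ∈ E ∧ b ∈ ps ∧ ps ≠ p₁ ∧ ℓ q ≠ ℓ ps ∧ ℓ ps ≠ ℓ p₁ := by
          by_cases h : ℓ q = ℓ p₂
          · exact ⟨p₃, hp₃E, hbp₃, Ne.symm h13, fun h2 => hl23 (h ▸ h2 ▸ rfl), Ne.symm hl13⟩
          · exact ⟨p₂, hp₂E, hbp₂, Ne.symm h12, h, Ne.symm hl12⟩
        have haps : a ∉ ps := hanotin ps hpsE hps1 hbps
        obtain ⟨y, hyb, hpsby⟩ := pair_other (hcard ps hpsE) hbps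
        rw [pair_comm] at hpsby
        have hya : y ≠ a := by
          intro h
          exact haps (by rw [hpsby, h]; simp)
        have hqps : q ≠ ps := by
          intro h
          exact haps (h ▸ haq)
        have h3appl := h3 q hqE p₁ hp₁E ps hpsE hqne hqps (Ne.symm hps1)
          hlq1 hlqs (Ne.symm hls1)
        have hsub2 : (q ∆ p₁) ∆ ps ⊆ {x, y} := by
          rw [hqax, hp₁ab, hpsby]
          exact symmdiff_pairs hab hxa hxb hyb hya
        have : ((q ∆ p₁) ∆ ps).card ≤ 2 :=
          le_trans (card_le_card hsub2) (le_trans (card_insert_le _ _) (by simp))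
        omega
      -- now all degrees ≤ 2: double count
      have hdouble : 2 * E.card ≤ 2 * U.card := by
        have h1 : ∀ p ∈ E, (p.card : ℕ) = ∑ x ∈ U, if x ∈ p then 1 else 0 := by
          intro p hp
          rw [← Finset.card_filter]
          congr 1
          ext t
          simp only [Finset.mem_filter]
          exact ⟨fun h => ⟨hsub p hp h, h⟩, fun h => h.2⟩
        have h2 : ∑ p ∈ E, p.card = ∑ x ∈ U, (E.filter (fun p => x ∈ p)).card := by
          rw [Finset.sum_congr rfl h1, Finset.sum_comm]
          exact Finset.sum_congr rfl fun x _ => (Finset.card_filter _ _).symm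
        have h3 : ∑ p ∈ E, p.card = 2 * E.card := by
          rw [Finset.sum_congr rfl hcard]
          simp [mul_comm]
        have h4 : ∑ x ∈ U, (E.filter (fun p => x ∈ p)).card ≤ 2 * U.card := by
          calc ∑ x ∈ U, (E.filter (fun p => x ∈ p)).card ≤ ∑ _x ∈ U, 2 :=
                Finset.sum_le_sum fun x _ => hmax x
            _ = 2 * U.card := by simp [mul_comm]
        omega
      omega

/-- Main Lemma (diameter/covering radius form): if every nonzero column of `G` has at
least `K` pairwise disjoint representations as a sum of two other columns, then every
coset of `V^⊥` contains a vector of Hamming weight at most `n / (K+1)`. -/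
theorem main_lemma_covering_radius
    (m n K : ℕ) (hK : 1 ≤ K)
    (G : Fin m → Fin n → ZMod 2)
    (v : Fin n → Fin m → ZMod 2) (hv : ∀ i r, v i r = G r i)
    (V : Submodule (ZMod 2) (Fin n → ZMod 2))
    (hV : V = Submodule.span (ZMod 2) (Set.range G))
    (hpairs : ∀ i : Fin n, v i ≠ 0 →
      ∃ P : Finset (Finset (Fin n)),
        K ≤ P.card ∧
        (P : Set (Finset (Fin n))).PairwiseDisjoint id ∧
        ∀ s ∈ P, ∃ j l : Fin n, j ≠ l ∧ s = {j, l} ∧ i ∉ s ∧ v i = v j + v l) :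
    ∀ x : Fin n → ZMod 2, ∃ z : Fin n → ZMod 2,
      z - x ∈ dualSet (V : Set (Fin n → ZMod 2)) ∧
      (hammingNorm z : ℝ) ≤ (n : ℝ) / (K + 1) := by
  classical
  intro x
  have hz2 : ∀ a : ZMod 2, a ≠ 0 ↔ a = 1 := by decide
  have hzor : ∀ a : ZMod 2, a = 0 ∨ a = 1 := by decide
  have hz3 : ∀ a : ZMod 2, a + a = 0 := by decide
  have hf2 : ∀ w : Fin m → ZMod 2, w + w = 0 := fun w => funext fun r => hz3 (w r)
  -- minimal z in the coset
  have hex : ∃ k, ∃ z : Fin n → ZMod 2,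
      (∀ r, ∑ i, z i * v i r = ∑ i, x i * v i r) ∧ hammingNorm z = k :=
    ⟨_, x, fun _ => rfl, rfl⟩
  obtain ⟨z, hzx, hzk⟩ := Nat.find_spec hex
  have hmin : ∀ z' : Fin n → ZMod 2,
      (∀ r, ∑ i, z' i * v i r = ∑ i, x i * v i r) → hammingNorm z ≤ hammingNorm z' := by
    intro z' h
    rw [hzk]
    exact Nat.find_min' hex ⟨z', h, rfl⟩
  refine ⟨z, ?_, ?_⟩
  · -- dual membership
    rw [hV]
    intro u hu
    have hy : ∀ r, ∑ i, G r i * (z - x) i = 0 := by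
      intro r
      have h1 : ∑ i, (z i - x i) * v i r = 0 := by
        rw [Finset.sum_congr rfl (fun i _ => sub_mul (z i) (x i) (v i r)),
          Finset.sum_sub_distrib, hzx r, sub_self]
      rw [← h1]
      exact Finset.sum_congr rfl fun i _ => by rw [Pi.sub_apply, mul_comm, hv]
    induction hu using Submodule.span_induction with
    | mem u hu =>
      obtain ⟨r, rfl⟩ := hu
      exact hy r
    | zero => simp
    | add a b _ _ ha hb =>
      have heq : ∑ i, (a + b) i * (z - x) i
          = (∑ i, a i * (z - x) i) + ∑ i, b i * (z - x) i := by
        rw [← Finset.sum_add_distrib]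
        exact Finset.sum_congr rfl fun i _ => by rw [Pi.add_apply, add_mul]
      rw [heq, ha, hb, add_zero]
    | smul c a _ ha =>
      have heq : ∑ i, (c • a) i * (z - x) i = c • ∑ i, a i * (z - x) i := by
        rw [Finset.smul_sum]
        exact Finset.sum_congr rfl fun i _ => by
          rw [Pi.smul_apply, smul_eq_mul, smul_eq_mul, mul_assoc]
      rw [heq, ha, smul_zero]
  · -- weight bound
    set S : Finset (Fin n) := Finset.univ.filter (fun i => z i ≠ 0) with hSdef
    have hs : hammingNorm z = S.card := rfl
    have hzS : ∀ i ∈ S, z i = 1 := by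
      intro i hi
      rw [hSdef, Finset.mem_filter] at hi
      exact (hz2 (z i)).1 hi.2
    have hzNS : ∀ i, i ∉ S → z i = 0 := by
      intro i hi
      rw [hSdef, Finset.mem_filter] at hi
      rcases hzor (z i) with h | h
      · exact h
      · exact absurd ⟨Finset.mem_univ i, by rw [h]; exact one_ne_zero⟩ hi
    -- master flip lemma
    have master : ∀ A B : Finset (Fin n), A ⊆ S → (∀ b ∈ B, b ∉ S) →
        (∀ r, (∑ i ∈ A, v i r) + ∑ i ∈ B, v i r = 0) → A.card ≤ B.card := by
      intro A B hA hB hsum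
      have hdAB : Disjoint A B := by
        rw [Finset.disjoint_left]
        exact fun a ha hb => hB a hb (hA ha)
      set z' : Fin n → ZMod 2 := fun i => if i ∈ A ∪ B then z i + 1 else z i with hz'
      have hz'syn : ∀ r, ∑ i, z' i * v i r = ∑ i, x i * v i r := by
        intro r
        have h1 : ∀ i, z' i * v i r
            = z i * v i r + (if i ∈ A ∪ B then v i r else 0) := by
          intro i
          by_cases h : i ∈ A ∪ B
          · simp only [hz', if_pos h, add_mul, one_mul]
          · simp only [hz', if_neg h, add_zero]
        rw [Finset.sum_congr rfl (fun i _ => h1 i), Finset.sum_add_distrib]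
        have h2 : (∑ i, if i ∈ A ∪ B then v i r else 0) = ∑ i ∈ A ∪ B, v i r := by
          rw [Finset.sum_ite_mem, Finset.univ_inter]
        rw [h2, Finset.sum_union hdAB, hsum r, add_zero, hzx r]
      have hwt : hammingNorm z' = ((S \ A) ∪ B).card := by
        show (Finset.univ.filter (fun i => z' i ≠ 0)).card = _
        congr 1
        ext i
        simp only [Finset.mem_filter, Finset.mem_univ, true_and, Finset.mem_union,
          Finset.mem_sdiff]
        by_cases hiA : i ∈ A
        · have : z' i = 0 := by
            simp [hz', Finset.mem_union, hiA, hzS i (hA hiA), hz3 1]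
          simp [this, hiA, fun h : i ∈ B => (Finset.disjoint_left.1 hdAB hiA h)]
        · by_cases hiB : i ∈ B
          · have : z' i = 1 := by
              simp [hz', Finset.mem_union, hiB, hzNS i (hB i hiB)]
            simp [this, hiB]
          · have : z' i = z i := by
              simp [hz', Finset.mem_union, hiA, hiB]
            simp only [this, hiA, hiB, or_false, not_false_eq_true, and_true]
            rw [hSdef]
            simp
      have hcard2 : ((S \ A) ∪ B).card = S.card - A.card + B.card := by
        rw [Finset.card_union_of_disjoint, Finset.card_sdiff_of_subset hA]
        rw [Finset.disjoint_left]
        intro a ha hb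
        exact hB a hb (Finset.mem_sdiff.1 ha).1
      have := hmin z' hz'syn
      rw [hs, hwt, hcard2] at this
      have hAS : A.card ≤ S.card := Finset.card_le_card hA
      omega
    -- every support index has nonzero column
    have hvS : ∀ i ∈ S, v i ≠ 0 := by
      intro i hi hvi
      have h := master {i} ∅ (Finset.singleton_subset_iff.2 hi) (by simp)
        (fun r => by simp [congrFun hvi r])
      simp at h
    -- choose pair families
    have hPex : ∀ i : Fin n, ∃ Pi : Finset (Finset (Fin n)), i ∈ S →
        (K ≤ Pi.card ∧ (Pi : Set (Finset (Fin n))).PairwiseDisjoint id ∧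
          ∀ s ∈ Pi, ∃ j l : Fin n, j ≠ l ∧ s = {j, l} ∧ i ∉ s ∧ v i = v j + v l) := by
      intro i
      by_cases hi : i ∈ S
      · obtain ⟨Pi, h⟩ := hpairs i (hvS i hi)
        exact ⟨Pi, fun _ => h⟩
      · exact ⟨∅, fun h => absurd h hi⟩
    choose P hP using hPex
    have hPcard2 : ∀ i ∈ S, ∀ p ∈ P i, p.card = 2 := by
      intro i hi p hp
      obtain ⟨j, l, hjl, rfl, _, _⟩ := (hP i hi).2.2 p hp
      rw [Finset.card_insert_of_notMem (by simp [hjl]), Finset.card_singleton]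
    have hPsum : ∀ i ∈ S, ∀ p ∈ P i, ∀ r, (∑ t ∈ p, v t r) = v i r := by
      intro i hi p hp r
      obtain ⟨j, l, hjl, rfl, _, hsum⟩ := (hP i hi).2.2 p hp
      rw [Finset.sum_pair hjl, congrFun hsum r]
      rfl
    have hPnoti : ∀ i ∈ S, ∀ p ∈ P i, i ∉ p := by
      intro i hi p hp
      obtain ⟨j, l, _, rfl, hnot, _⟩ := (hP i hi).2.2 p hp
      exact hnot
    -- pairs avoid S
    have hPout : ∀ i ∈ S, ∀ p ∈ P i, ∀ t ∈ p, t ∉ S := by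
      intro i hi p hp t ht htS
      have hiA : i ∉ p.filter (· ∈ S) :=
        fun h => hPnoti i hi p hp (Finset.mem_filter.1 h).1
      have h := master (insert i (p.filter (· ∈ S))) (p.filter (· ∉ S))
        (by
          intro a ha
          rcases Finset.mem_insert.1 ha with rfl | ha
          · exact hi
          · exact (Finset.mem_filter.1 ha).2)
        (fun b hb => (Finset.mem_filter.1 hb).2)
        (fun r => by
          rw [Finset.sum_insert hiA, add_assoc,
            Finset.sum_filter_add_sum_filter_not p (· ∈ S) (fun t => v t r),
            hPsum i hi p hp r]
          exact hz3 _)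
      rw [Finset.card_insert_of_notMem hiA] at h
      have hsplit := Finset.card_filter_add_card_filter_not (s := p)
        (p := (· ∈ S))
      rw [hPcard2 i hi p hp] at hsplit
      have htf : t ∈ p.filter (· ∈ S) := Finset.mem_filter.2 ⟨ht, htS⟩
      have : 1 ≤ (p.filter (· ∈ S)).card := Finset.card_pos.2 ⟨t, htf⟩
      omega
    -- distinct support indices have disjoint pair families
    have hPdisjfam : ∀ i ∈ S, ∀ i' ∈ S, i ≠ i' → ∀ p, p ∈ P i → p ∈ P i' → False := by
      intro i hi i' hi' hne p hpi hpi'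
      have h := master {i, i'} ∅
        (by
          intro a ha
          rcases Finset.mem_insert.1 ha with rfl | ha
          · exact hi
          · rw [Finset.mem_singleton] at ha
            exact ha ▸ hi')
        (by simp)
        (fun r => by
          rw [Finset.sum_empty, add_zero, Finset.sum_pair hne,
            ← hPsum i hi p hpi r, ← hPsum i' hi' p hpi' r]
          exact hz3 _)
      rw [Finset.card_insert_of_notMem (by simp [hne]), Finset.card_singleton,
        Finset.card_empty] at h
      omega
    -- conclude via graph lemma
    rcases Finset.eq_empty_or_nonempty S with hSemp | ⟨i₀, hi₀⟩
    · rw [hs, hSemp]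
      simp
      positivity
    have hEcard : K * S.card ≤ (S.biUnion P).card := by
      rw [Finset.card_biUnion (fun i hi j hj hne => Finset.disjoint_left.2
        (fun p hpi hpj => hPdisjfam i hi j hj hne p hpi hpj))]
      calc K * S.card = ∑ _i ∈ S, K := by rw [Finset.sum_const, smul_eq_mul, mul_comm]
        _ ≤ ∑ i ∈ S, (P i).card := Finset.sum_le_sum fun i hi => (hP i hi).1
    have hlabex : ∀ p : Finset (Fin n), ∃ i : Fin n,
        p ∈ S.biUnion P → (i ∈ S ∧ p ∈ P i) := by
      intro p
      by_cases hp : p ∈ S.biUnion P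
      · obtain ⟨i, hi, hpi⟩ := Finset.mem_biUnion.1 hp
        exact ⟨i, fun _ => ⟨hi, hpi⟩⟩
      · exact ⟨i₀, fun h => absurd h hp⟩
    choose ℓ hℓ using hlabex
    have hgraph := graph_lemma (S.biUnion P).card (S.biUnion P) (Finset.univ \ S) ℓ
      le_rfl
      (fun p hp => hPcard2 (ℓ p) (hℓ p hp).1 p (hℓ p hp).2)
      (fun p hp t ht => Finset.mem_sdiff.2
        ⟨Finset.mem_univ t, hPout (ℓ p) (hℓ p hp).1 p (hℓ p hp).2 t ht⟩)
      (fun p hp q hq hne hlab => by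
        have h1 := hℓ p hp
        have h2 := hℓ q hq
        have hq' : q ∈ P (ℓ p) := by rw [hlab]; exact h2.2
        have hd := (hP (ℓ p) h1.1).2.1 (Finset.mem_coe.2 h1.2) (Finset.mem_coe.2 hq') hne
        exact hd)
      (fun p hp q hq w hw hpq hpw hqw hl1 hl2 hl3 => by
        have h1 := hℓ p hp
        have h2 := hℓ q hq
        have h3' := hℓ w hw
        have hA : ({ℓ p, ℓ q, ℓ w} : Finset (Fin n)) ⊆ S := by
          intro a ha
          rcases Finset.mem_insert.1 ha with rfl | ha
          · exact h1.1
          rcases Finset.mem_insert.1 ha with rfl | ha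
          · exact h2.1
          rw [Finset.mem_singleton] at ha
          exact ha ▸ h3'.1
        have hB : ∀ b ∈ (p ∆ q) ∆ w, b ∉ S := by
          intro b hb
          have hb' : b ∈ p ∨ b ∈ q ∨ b ∈ w := by
            simp only [Finset.mem_symmDiff] at hb
            tauto
          rcases hb' with h | h | h
          · exact hPout (ℓ p) h1.1 p h1.2 b h
          · exact hPout (ℓ q) h2.1 q h2.2 b h
          · exact hPout (ℓ w) h3'.1 w h3'.2 b h
        have hsumc : ∀ r, (∑ i ∈ ({ℓ p, ℓ q, ℓ w} : Finset (Fin n)), v i r)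
            + ∑ t ∈ (p ∆ q) ∆ w, v t r = 0 := by
          intro r
          have e1 : ∑ t ∈ (p ∆ q) ∆ w, v t r
              = ((∑ t ∈ p, v t r) + ∑ t ∈ q, v t r) + ∑ t ∈ w, v t r := by
            rw [sum_symmDiff_char2 hz3 (fun t => v t r) (p ∆ q) w,
              sum_symmDiff_char2 hz3 (fun t => v t r) p q]
          have e2 : ∑ i ∈ ({ℓ p, ℓ q, ℓ w} : Finset (Fin n)), v i r
              = v (ℓ p) r + (v (ℓ q) r + v (ℓ w) r) := by
            rw [Finset.sum_insert (by simp [hl1, hl2]), Finset.sum_pair hl3]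
          rw [e1, e2, hPsum (ℓ p) h1.1 p h1.2 r, hPsum (ℓ q) h2.1 q h2.2 r,
            hPsum (ℓ w) h3'.1 w h3'.2 r]
          have : ∀ a b c : ZMod 2, a + (b + c) + (a + b + c) = 0 := by decide
          exact this _ _ _
        have hm := master _ _ hA hB hsumc
        have hAcard : ({ℓ p, ℓ q, ℓ w} : Finset (Fin n)).card = 3 := by
          rw [Finset.card_insert_of_notMem (by simp [hl1, hl2]),
            Finset.card_insert_of_notMem (by simp [hl3]), Finset.card_singleton]
        omega)
    have hUcard : (Finset.univ \ S).card = n - S.card := by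
      rw [Finset.card_sdiff_of_subset (Finset.subset_univ S), Finset.card_univ, Fintype.card_fin]
    have hSn : S.card ≤ n := by
      simpa using Finset.card_le_univ S
    have hfin : (K + 1) * S.card ≤ n := by
      have h1 : K * S.card ≤ n - S.card := by
        rw [← hUcard]
        exact le_trans hEcard hgraph
      have h2 : K * S.card + S.card ≤ n := by
        have h3 := Nat.sub_add_cancel hSn
        exact le_trans (Nat.add_le_add_right h1 _) (le_of_eq h3)
      calc (K + 1) * S.card = K * S.card + S.card := by ring
        _ ≤ n := h2
    rw [hs]
    have hpos : (0:ℝ) < (K:ℝ) + 1 := by positivity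
    rw [le_div_iff₀ hpos]
    calc (S.card : ℝ) * ((K:ℝ) + 1) = (((K + 1) * S.card : ℕ) : ℝ) := by
          push_cast; ring
      _ ≤ (n : ℝ) := by exact_mod_cast hfin
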